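/- arXiv:0903.1062 — 2 statements merged into one kernel-verified Lean document; each statement's English description precedes it below -/
import Mathlib

section
/- For every integer k and every finite product P = x⁻(m₁)x⁻(m₂)⋯x⁻(m_r) in U_q (m_i ∈ ℤ, r ≥ 0), the commutator [x⁺(k), P] = x⁺(k)P − Px⁺(k) lies in the F-linear span of the elements a(r₁)⋯a(r_j)·Kᵃ·Q and a(−r₁)⋯a(−r_j)·Kᵇ·R, where j ≥ 0, r₁,…,r_j are positive integers, a, b ∈ ℤ, and Q, R range over the subalgebra of U_q generated by {x⁻(n) : n ∈ ℤ} ∪ {γ^{1/2}, γ^{−1/2}}. -/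
noncomputable section

/-- `F = ℚ(s)`, the field of rational functions over `ℚ` in the indeterminate `s`. -/
abbrev F : Type := RatFunc ℚ

/-- `q = s²`, so that `q^{1/2} = s ∈ F`. -/
def q : F := RatFunc.X ^ 2

/-- The quantum integer `[n] = (qⁿ - q⁻ⁿ)/(q - q⁻¹)`. -/
def qint (n : ℤ) : F := (q ^ n - q ^ (-n)) / (q - q⁻¹)

/-- Generators of `U_q(ŝl₂)` in the Drinfeld realization. -/
inductive UGen : Type
  | xp : ℤ → UGen
  | xm : ℤ → UGen
  | a : (l : ℤ) → l ≠ 0 → UGen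
  | K : UGen
  | Kinv : UGen
  | D : UGen
  | Dinv : UGen
  | gh : UGen
  | ghi : UGen

/-- The free `F`-algebra on the generators. -/
abbrev UFA := FreeAlgebra F UGen

/-- `x⁺(k)` in the free algebra. -/
def xpF (k : ℤ) : UFA := FreeAlgebra.ι F (UGen.xp k)
/-- `x⁻(k)` in the free algebra. -/
def xmF (k : ℤ) : UFA := FreeAlgebra.ι F (UGen.xm k)
/-- `a(l)` in the free algebra (by convention `0` if `l = 0`). -/
def aF (l : ℤ) : UFA := if h : l ≠ 0 then FreeAlgebra.ι F (UGen.a l h) else 0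
/-- `K` in the free algebra. -/
def KF : UFA := FreeAlgebra.ι F UGen.K
/-- `K⁻¹` in the free algebra. -/
def KinvF : UFA := FreeAlgebra.ι F UGen.Kinv
/-- `D` in the free algebra. -/
def DF : UFA := FreeAlgebra.ι F UGen.D
/-- `D⁻¹` in the free algebra. -/
def DinvF : UFA := FreeAlgebra.ι F UGen.Dinv
/-- `γ^{1/2}` in the free algebra. -/
def ghF : UFA := FreeAlgebra.ι F UGen.gh
/-- `γ^{-1/2}` in the free algebra. -/
def ghiF : UFA := FreeAlgebra.ι F UGen.ghi

/-- `(γ^{1/2})ᵐ` for `m ∈ ℤ` in the free algebra. -/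
def ghPowF (m : ℤ) : UFA := if 0 ≤ m then ghF ^ m.toNat else ghiF ^ (-m).toNat

/-- `γᵐ = ((γ^{1/2})²)ᵐ` for `m ∈ ℤ` in the free algebra. -/
def gaPowF (m : ℤ) : UFA :=
  if 0 ≤ m then (ghF * ghF) ^ m.toNat else (ghiF * ghiF) ^ (-m).toNat

/-- `ψ(m)`: `ψ(m) = 0` for `m < 0`, `ψ(0) = K`, and for `m > 0`
`ψ(m) = K·∑_{j=1}^{m} ((q−q⁻¹)ʲ/j!)·∑_{k₁+⋯+k_j=m, kᵢ≥1} a(k₁)⋯a(k_j)`.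
(Tuples with a zero entry contribute `0` since `aF 0 = 0`.) -/
def psiF (m : ℤ) : UFA :=
  if m < 0 then 0
  else if m = 0 then KF
  else KF * ∑ j ∈ Finset.Icc 1 m.toNat,
    ((q - q⁻¹) ^ j / (j.factorial : F)) •
      ∑ k ∈ Finset.Nat.antidiagonalTuple j m.toNat,
        (List.ofFn fun i => aF ((k i : ℤ))).prod

/-- `φ(m)`: `φ(m) = 0` for `m > 0`, `φ(0) = K⁻¹`, and for `m > 0`
`φ(−m) = K⁻¹·∑_{j=1}^{m} ((−(q−q⁻¹))ʲ/j!)·∑_{k₁+⋯+k_j=m, kᵢ≥1} a(−k₁)⋯a(−k_j)`. -/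
def phiF (m : ℤ) : UFA :=
  if 0 < m then 0
  else if m = 0 then KinvF
  else KinvF * ∑ j ∈ Finset.Icc 1 (-m).toNat,
    ((-(q - q⁻¹)) ^ j / (j.factorial : F)) •
      ∑ k ∈ Finset.Nat.antidiagonalTuple j (-m).toNat,
        (List.ofFn fun i => aF (-(k i : ℤ))).prod

/-- The defining relations of `U_q(ŝl₂)` in the Drinfeld realization. -/
inductive URel : UFA → UFA → Prop
  | KKinv : URel (KF * KinvF) 1
  | KinvK : URel (KinvF * KF) 1
  | DDinv : URel (DF * DinvF) 1
  | DinvD : URel (DinvF * DF) 1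
  /- `γ^{±1/2}` central, `γ^{1/2}γ^{-1/2} = 1` -/
  | central_gh (x : UGen) : URel (ghF * FreeAlgebra.ι F x) (FreeAlgebra.ι F x * ghF)
  | central_ghi (x : UGen) : URel (ghiF * FreeAlgebra.ι F x) (FreeAlgebra.ι F x * ghiF)
  | ghghi : URel (ghF * ghiF) 1
  | ghighF : URel (ghiF * ghF) 1
  /- `[a(k), a(l)] = δ_{k+l,0}·([2k]/k)·(γᵏ − γ⁻ᵏ)/(q − q⁻¹)` -/
  | aa (k l : ℤ) (hk : k ≠ 0) (hl : l ≠ 0) :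
      URel (aF k * aF l - aF l * aF k)
        (if k + l = 0 then
          (qint (2 * k) / (k : F)) • ((q - q⁻¹)⁻¹ • (gaPowF k - gaPowF (-k)))
         else 0)
  /- `[a(k), K] = 0`, `[D, K] = 0` -/
  | aK (k : ℤ) (hk : k ≠ 0) : URel (aF k * KF) (KF * aF k)
  | DK : URel (DF * KF) (KF * DF)
  /- `Da(k)D⁻¹ = qᵏa(k)` -/
  | DaDinv (k : ℤ) (hk : k ≠ 0) : URel (DF * aF k * DinvF) (q ^ k • aF k)
  /- `Dx^{±}(k)D⁻¹ = qᵏx^{±}(k)` -/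
  | DxpDinv (k : ℤ) : URel (DF * xpF k * DinvF) (q ^ k • xpF k)
  | DxmDinv (k : ℤ) : URel (DF * xmF k * DinvF) (q ^ k • xmF k)
  /- `Kx^{±}(k)K⁻¹ = q^{±2}x^{±}(k)` -/
  | KxpKinv (k : ℤ) : URel (KF * xpF k * KinvF) (q ^ 2 • xpF k)
  | KxmKinv (k : ℤ) : URel (KF * xmF k * KinvF) ((q ^ 2)⁻¹ • xmF k)
  /- `[a(k), x^{±}(l)] = ±([2k]/k)·(γ^{1/2})^{∓|k|}·x^{±}(k+l)` -/
  | axp (k l : ℤ) (hk : k ≠ 0) :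
      URel (aF k * xpF l - xpF l * aF k)
        ((qint (2 * k) / (k : F)) • (ghiF ^ k.natAbs * xpF (k + l)))
  | axm (k l : ℤ) (hk : k ≠ 0) :
      URel (aF k * xmF l - xmF l * aF k)
        (-((qint (2 * k) / (k : F)) • (ghF ^ k.natAbs * xmF (k + l))))
  /- `x^{±}(k+1)x^{±}(l) − q^{±2}x^{±}(l)x^{±}(k+1) = q^{±2}x^{±}(k)x^{±}(l+1) − x^{±}(l+1)x^{±}(k)` -/
  | serre_p (k l : ℤ) :
      URel (xpF (k + 1) * xpF l - q ^ 2 • (xpF l * xpF (k + 1)))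
        (q ^ 2 • (xpF k * xpF (l + 1)) - xpF (l + 1) * xpF k)
  | serre_m (k l : ℤ) :
      URel (xmF (k + 1) * xmF l - (q ^ 2)⁻¹ • (xmF l * xmF (k + 1)))
        ((q ^ 2)⁻¹ • (xmF k * xmF (l + 1)) - xmF (l + 1) * xmF k)
  /- `[x⁺(k), x⁻(l)] = ((γ^{1/2})^{k−l}ψ(k+l) − (γ^{1/2})^{l−k}φ(k+l))/(q − q⁻¹)` -/
  | xpxm (k l : ℤ) :
      URel (xpF k * xmF l - xmF l * xpF k)
        ((q - q⁻¹)⁻¹ • (ghPowF (k - l) * psiF (k + l) - ghPowF (l - k) * phiF (k + l)))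

/-- The quantum affine algebra `U_q = U_q(ŝl₂)` in the Drinfeld realization. -/
abbrev Uq := RingQuot URel

/-- `x⁺(k) ∈ U_q`. -/
def XP (k : ℤ) : Uq := RingQuot.mkAlgHom F URel (xpF k)
/-- `x⁻(k) ∈ U_q`. -/
def XM (k : ℤ) : Uq := RingQuot.mkAlgHom F URel (xmF k)
/-- `a(l) ∈ U_q`. -/
def AU (l : ℤ) : Uq := RingQuot.mkAlgHom F URel (aF l)
/-- `K ∈ U_q`. -/
def KU : Uq := RingQuot.mkAlgHom F URel KF
/-- `K⁻¹ ∈ U_q`. -/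
def KinvU : Uq := RingQuot.mkAlgHom F URel KinvF
/-- `D ∈ U_q`. -/
def DU : Uq := RingQuot.mkAlgHom F URel DF
/-- `D⁻¹ ∈ U_q`. -/
def DinvU : Uq := RingQuot.mkAlgHom F URel DinvF
/-- `γ^{1/2} ∈ U_q`. -/
def GhU : Uq := RingQuot.mkAlgHom F URel ghF
/-- `γ^{-1/2} ∈ U_q`. -/
def GhiU : Uq := RingQuot.mkAlgHom F URel ghiF

/-- The subalgebra of `U_q` generated by `{x⁻(n) : n ∈ ℤ} ∪ {γ^{1/2}, γ^{−1/2}}`. -/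
def Nsub : Subalgebra F Uq := Algebra.adjoin F (Set.range XM ∪ {GhU, GhiU})

/-- `Kᵃ ∈ U_q` for `a ∈ ℤ`. -/
def KPow (a : ℤ) : Uq := if 0 ≤ a then KU ^ a.toNat else KinvU ^ (-a).toNat

/-- The set of elements `a(r₁)⋯a(r_j)·Kᵃ·Q` and `a(−r₁)⋯a(−r_j)·Kᵇ·R` with
`j ≥ 0`, `r₁,…,r_j` positive integers, `a, b ∈ ℤ`, and `Q, R` in the subalgebra
generated by the `x⁻(n)` and `γ^{±1/2}`. -/
def SpanSet : Set Uq :=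
  {z | ∃ (j : ℕ) (r : Fin j → ℕ), (∀ i, 0 < r i) ∧
        ∃ (a : ℤ) (Q : Uq), Q ∈ Nsub ∧
          z = (List.ofFn fun i => AU ((r i : ℤ))).prod * KPow a * Q} ∪
  {z | ∃ (j : ℕ) (r : Fin j → ℕ), (∀ i, 0 < r i) ∧
        ∃ (b : ℤ) (R : Uq), R ∈ Nsub ∧
          z = (List.ofFn fun i => AU (-(r i : ℤ))).prod * KPow b * R}


/-! ### Auxiliary lemmas -/

local notation "mkU" => RingQuot.mkAlgHom F URel

lemma q_ne_zero : q ≠ 0 := pow_ne_zero 2 RatFunc.X_ne_zero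

lemma gh_central (u : Uq) : Commute GhU u := by
  obtain ⟨w, rfl⟩ := RingQuot.mkAlgHom_surjective F URel u
  refine FreeAlgebra.induction F UGen ?_ ?_ ?_ ?_ w
  · intro r
    rw [AlgHom.commutes]
    exact (Algebra.commutes r GhU).symm
  · intro x
    show GhU * mkU (FreeAlgebra.ι F x) = mkU (FreeAlgebra.ι F x) * GhU
    rw [GhU, ← map_mul, ← map_mul]
    exact RingQuot.mkAlgHom_rel F (URel.central_gh x)
  · intro a b ha hb
    rw [map_mul]; exact ha.mul_right hb
  · intro a b ha hb
    rw [map_add]; exact ha.add_right hb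

lemma ghi_central (u : Uq) : Commute GhiU u := by
  obtain ⟨w, rfl⟩ := RingQuot.mkAlgHom_surjective F URel u
  refine FreeAlgebra.induction F UGen ?_ ?_ ?_ ?_ w
  · intro r
    rw [AlgHom.commutes]
    exact (Algebra.commutes r GhiU).symm
  · intro x
    show GhiU * mkU (FreeAlgebra.ι F x) = mkU (FreeAlgebra.ι F x) * GhiU
    rw [GhiU, ← map_mul, ← map_mul]
    exact RingQuot.mkAlgHom_rel F (URel.central_ghi x)
  · intro a b ha hb
    rw [map_mul]; exact ha.mul_right hb
  · intro a b ha hb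
    rw [map_add]; exact ha.add_right hb

/-- `(γ^{1/2})ᵈ` in `U_q`. -/
def GhPow (d : ℤ) : Uq := mkU (ghPowF d)

lemma GhPow_eq (d : ℤ) :
    GhPow d = if 0 ≤ d then GhU ^ d.toNat else GhiU ^ (-d).toNat := by
  rw [GhPow, ghPowF]
  split_ifs with h
  · rw [map_pow]; rfl
  · rw [map_pow]; rfl

lemma GhPow_central (d : ℤ) (u : Uq) : Commute (GhPow d) u := by
  rw [GhPow_eq]
  split_ifs with h
  · exact (gh_central u).pow_left _
  · exact (ghi_central u).pow_left _

lemma XM_mem (m : ℤ) : XM m ∈ Nsub :=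
  Algebra.subset_adjoin (Or.inl ⟨m, rfl⟩)

lemma GhU_mem : GhU ∈ Nsub :=
  Algebra.subset_adjoin (Or.inr (Set.mem_insert _ _))

lemma GhiU_mem : GhiU ∈ Nsub :=
  Algebra.subset_adjoin (Or.inr (Set.mem_insert_of_mem _ rfl))

lemma GhPow_mem (d : ℤ) : GhPow d ∈ Nsub := by
  rw [GhPow_eq]
  split_ifs with h
  · exact pow_mem GhU_mem _
  · exact pow_mem GhiU_mem _

lemma KU_KinvU : KU * KinvU = 1 := by
  rw [KU, KinvU, ← map_mul]
  have h := RingQuot.mkAlgHom_rel F URel.KKinv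
  rw [h, map_one]

lemma KinvU_KU : KinvU * KU = 1 := by
  rw [KinvU, KU, ← map_mul]
  have h := RingQuot.mkAlgHom_rel F URel.KinvK
  rw [h, map_one]

lemma KPow_one : KPow 1 = KU := by norm_num [KPow]

lemma KPow_neg_one : KPow (-1) = KinvU := by norm_num [KPow]

lemma xm_K (m : ℤ) : XM m * KU = (q ^ 2) • (KU * XM m) := by
  have h : KU * XM m * KinvU = (q ^ 2)⁻¹ • XM m := by
    have h0 := RingQuot.mkAlgHom_rel F (URel.KxmKinv m)
    rw [map_mul, map_mul, map_smul] at h0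
    exact h0
  have h2 : KU * XM m = (q ^ 2)⁻¹ • (XM m * KU) := by
    calc KU * XM m = KU * XM m * (KinvU * KU) := by rw [KinvU_KU, mul_one]
    _ = (KU * XM m * KinvU) * KU := by rw [← mul_assoc]
    _ = ((q ^ 2)⁻¹ • XM m) * KU := by rw [h]
    _ = (q ^ 2)⁻¹ • (XM m * KU) := smul_mul_assoc _ _ _
  rw [h2, smul_smul, mul_inv_cancel₀ (pow_ne_zero 2 q_ne_zero), one_smul]

lemma xm_Kinv (m : ℤ) : XM m * KinvU = (q ^ 2)⁻¹ • (KinvU * XM m) := by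
  have h : KinvU * XM m = (q ^ 2) • (XM m * KinvU) := by
    calc KinvU * XM m = KinvU * (XM m * (KU * KinvU)) := by rw [KU_KinvU, mul_one]
    _ = KinvU * ((XM m * KU) * KinvU) := by rw [mul_assoc]
    _ = KinvU * (((q ^ 2) • (KU * XM m)) * KinvU) := by rw [xm_K]
    _ = (q ^ 2) • (KinvU * (KU * XM m * KinvU)) := by
          rw [smul_mul_assoc, mul_smul_comm]
    _ = (q ^ 2) • ((KinvU * KU) * (XM m * KinvU)) := by
          rw [mul_assoc, mul_assoc]
    _ = (q ^ 2) • (XM m * KinvU) := by rw [KinvU_KU, one_mul]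
  rw [h, smul_smul, inv_mul_cancel₀ (pow_ne_zero 2 q_ne_zero), one_smul]

lemma xm_KUpow (n : ℕ) (m : ℤ) : ∃ c : F, XM m * KU ^ n = c • (KU ^ n * XM m) := by
  induction n with
  | zero => exact ⟨1, by simp⟩
  | succ n ih =>
    obtain ⟨c, hc⟩ := ih
    refine ⟨c * q ^ 2, ?_⟩
    calc XM m * KU ^ (n + 1) = (XM m * KU ^ n) * KU := by rw [pow_succ KU n, ← mul_assoc]
    _ = (c • (KU ^ n * XM m)) * KU := by rw [hc]
    _ = c • (KU ^ n * (XM m * KU)) := by rw [smul_mul_assoc, mul_assoc]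
    _ = c • (KU ^ n * ((q ^ 2) • (KU * XM m))) := by rw [xm_K]
    _ = (c * q ^ 2) • (KU ^ n * (KU * XM m)) := by rw [mul_smul_comm, smul_smul]
    _ = (c * q ^ 2) • (KU ^ (n + 1) * XM m) := by rw [pow_succ KU n, mul_assoc]

lemma xm_KinvUpow (n : ℕ) (m : ℤ) : ∃ c : F, XM m * KinvU ^ n = c • (KinvU ^ n * XM m) := by
  induction n with
  | zero => exact ⟨1, by simp⟩
  | succ n ih =>
    obtain ⟨c, hc⟩ := ih
    refine ⟨c * (q ^ 2)⁻¹, ?_⟩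
    calc XM m * KinvU ^ (n + 1) = (XM m * KinvU ^ n) * KinvU := by
          rw [pow_succ KinvU n, ← mul_assoc]
    _ = (c • (KinvU ^ n * XM m)) * KinvU := by rw [hc]
    _ = c • (KinvU ^ n * (XM m * KinvU)) := by rw [smul_mul_assoc, mul_assoc]
    _ = c • (KinvU ^ n * ((q ^ 2)⁻¹ • (KinvU * XM m))) := by rw [xm_Kinv]
    _ = (c * (q ^ 2)⁻¹) • (KinvU ^ n * (KinvU * XM m)) := by rw [mul_smul_comm, smul_smul]
    _ = (c * (q ^ 2)⁻¹) • (KinvU ^ (n + 1) * XM m) := by rw [pow_succ KinvU n, mul_assoc]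

lemma xm_KPow (a : ℤ) (m : ℤ) : ∃ c : F, XM m * KPow a = c • (KPow a * XM m) := by
  rw [KPow]
  split_ifs with h
  · exact xm_KUpow _ m
  · exact xm_KinvUpow _ m

lemma AU_zero : AU 0 = 0 := by
  rw [AU, aF]
  simp

lemma qint_zero : qint 0 = 0 := by simp [qint]

lemma K_comm_a (n : ℤ) : Commute KU (AU n) := by
  rcases eq_or_ne n 0 with rfl | h
  · rw [AU_zero]; exact Commute.zero_right _
  · show KU * AU n = AU n * KU
    rw [KU, AU, ← map_mul, ← map_mul]
    exact (RingQuot.mkAlgHom_rel F (URel.aK n h)).symm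

lemma Kinv_comm_a (n : ℤ) : Commute KinvU (AU n) := by
  have h := (K_comm_a n).eq
  show KinvU * AU n = AU n * KinvU
  calc KinvU * AU n = KinvU * (AU n * (KU * KinvU)) := by rw [KU_KinvU, mul_one]
  _ = KinvU * ((AU n * KU) * KinvU) := by rw [mul_assoc]
  _ = KinvU * ((KU * AU n) * KinvU) := by rw [h]
  _ = (KinvU * KU) * (AU n * KinvU) := by rw [mul_assoc, mul_assoc]
  _ = AU n * KinvU := by rw [KinvU_KU, one_mul]

lemma xm_a (n m : ℤ) :
    XM m * AU n = AU n * XM m + (qint (2 * n) / (n : F)) • (GhU ^ n.natAbs * XM (n + m)) := by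
  rcases eq_or_ne n 0 with rfl | h
  · simp [AU_zero, qint_zero]
  · have h0 := RingQuot.mkAlgHom_rel F (URel.axm n m h)
    rw [map_sub, map_mul, map_mul, map_neg, map_smul, map_mul, map_pow] at h0
    have h1 : AU n * XM m - XM m * AU n
        = -((qint (2 * n) / (n : F)) • (GhU ^ n.natAbs * XM (n + m))) := h0
    rw [sub_eq_iff_eq_add] at h1
    rw [h1]
    abel

/-- Membership predicate for one of the two families of the spanning set,
encoded with lists. -/
def InS (ε : ℤ) (z : Uq) : Prop :=
  ∃ s : List ℕ, (∀ n ∈ s, 0 < n) ∧ ∃ a : ℤ, ∃ Q : Uq, Q ∈ Nsub ∧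
    z = (s.map fun n : ℕ => AU (ε * (n : ℤ))).prod * KPow a * Q

lemma span_mulLeft {u : Uq} {S : Set Uq}
    (h : ∀ z ∈ S, u * z ∈ Submodule.span F S) :
    ∀ z ∈ Submodule.span F S, u * z ∈ Submodule.span F S := by
  intro z hz
  induction hz using Submodule.span_induction with
  | mem w hw => exact h w hw
  | zero => simp
  | add x y _ _ hx hy => rw [mul_add]; exact add_mem hx hy
  | smul c x _ hx => rw [mul_smul_comm]; exact Submodule.smul_mem _ _ hx

lemma span_mulRight {u : Uq} {S : Set Uq}
    (h : ∀ z ∈ S, z * u ∈ Submodule.span F S) :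
    ∀ z ∈ Submodule.span F S, z * u ∈ Submodule.span F S := by
  intro z hz
  induction hz using Submodule.span_induction with
  | mem w hw => exact h w hw
  | zero => simp
  | add x y _ _ hx hy => rw [add_mul]; exact add_mem hx hy
  | smul c x _ hx => rw [smul_mul_assoc]; exact Submodule.smul_mem _ _ hx

lemma InS_mul_nsub {ε : ℤ} {z : Uq} (hz : InS ε z) {u : Uq} (hu : u ∈ Nsub) :
    InS ε (z * u) := by
  obtain ⟨s, hs, a, Q, hQ, rfl⟩ := hz
  exact ⟨s, hs, a, Q * u, mul_mem hQ hu, by rw [mul_assoc]⟩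

lemma span_InS_mul_nsub (ε : ℤ) {u : Uq} (hu : u ∈ Nsub) :
    ∀ z ∈ Submodule.span F {w | InS ε w}, z * u ∈ Submodule.span F {w | InS ε w} :=
  span_mulRight fun z hz => Submodule.subset_span (InS_mul_nsub hz hu)

lemma AU_mul_InS (ε : ℤ) (n : ℕ) (hn : 0 < n) {z : Uq} (hz : InS ε z) :
    InS ε (AU (ε * (n : ℤ)) * z) := by
  obtain ⟨s, hs, a, Q, hQ, rfl⟩ := hz
  refine ⟨n :: s, ?_, a, Q, hQ, ?_⟩
  · intro x hx
    rcases List.mem_cons.mp hx with rfl | hx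
    · exact hn
    · exact hs x hx
  · rw [List.map_cons, List.prod_cons, mul_assoc, mul_assoc, mul_assoc]

lemma key_lemma (ε : ℤ) (s : List ℕ) (hs : ∀ n ∈ s, 0 < n) :
    ∀ (a : ℤ) (Q : Uq), Q ∈ Nsub → ∀ m : ℤ,
      XM m * ((s.map fun n : ℕ => AU (ε * (n : ℤ))).prod * KPow a * Q)
        ∈ Submodule.span F {w | InS ε w} := by
  induction s with
  | nil =>
    intro a Q hQ m
    obtain ⟨c, hc⟩ := xm_KPow a m
    simp only [List.map_nil, List.prod_nil, one_mul]
    rw [← mul_assoc, hc, smul_mul_assoc, mul_assoc]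
    refine Submodule.smul_mem _ _ (Submodule.subset_span ?_)
    refine ⟨[], ?_, a, XM m * Q, mul_mem (XM_mem m) hQ, ?_⟩
    · intro n hn; exact absurd hn List.not_mem_nil
    · simp
  | cons n s ih =>
    intro a Q hQ m
    have hn : 0 < n := hs n List.mem_cons_self
    have hs' : ∀ x ∈ s, 0 < x := fun x hx => hs x (List.mem_cons_of_mem _ hx)
    set t : ℤ := ε * (n : ℤ) with ht
    set p : ℕ := t.natAbs with hp
    set c : F := qint (2 * t) / (t : F) with hc
    set rest : Uq := (s.map fun n : ℕ => AU (ε * (n : ℤ))).prod * KPow a * Q with hrest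
    have expand : ((n :: s).map fun n : ℕ => AU (ε * (n : ℤ))).prod * KPow a * Q
        = AU t * rest := by
      rw [hrest, List.map_cons, List.prod_cons, mul_assoc, mul_assoc, mul_assoc]
    have e1 : XM m * (AU t * rest)
        = AU t * (XM m * rest) + c • ((XM (t + m) * rest) * GhU ^ p) := by
      calc XM m * (AU t * rest) = (XM m * AU t) * rest := (mul_assoc _ _ _).symm
      _ = (AU t * XM m + c • (GhU ^ p * XM (t + m))) * rest := by rw [xm_a]
      _ = AU t * XM m * rest + (c • (GhU ^ p * XM (t + m))) * rest := add_mul _ _ _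
      _ = AU t * (XM m * rest) + c • (GhU ^ p * (XM (t + m) * rest)) := by
            rw [mul_assoc (AU t), smul_mul_assoc, mul_assoc (GhU ^ p)]
      _ = AU t * (XM m * rest) + c • ((XM (t + m) * rest) * GhU ^ p) := by
            rw [((gh_central (XM (t + m) * rest)).pow_left p).eq]
    rw [expand, e1]
    refine add_mem ?_ (Submodule.smul_mem _ _ ?_)
    · exact span_mulLeft (S := {w | InS ε w})
        (fun z hz => Submodule.subset_span (AU_mul_InS ε n hn hz)) _ (ih hs' a Q hQ m)
    · exact span_InS_mul_nsub ε (pow_mem GhU_mem p) _ (ih hs' a Q hQ (t + m))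

lemma xm_mul_span (ε : ℤ) (m : ℤ) :
    ∀ z ∈ Submodule.span F {w | InS ε w},
      XM m * z ∈ Submodule.span F {w | InS ε w} := by
  refine span_mulLeft ?_
  rintro _ ⟨s, hs, a, Q, hQ, rfl⟩
  exact key_lemma ε s hs a Q hQ m
lemma psi_term (d : ℤ) {j : ℕ} (kk : Fin j → ℕ) (P : Uq) (hP : P ∈ Nsub) :
    GhPow d * (KU * mkU ((List.ofFn fun i => aF ((kk i : ℤ))).prod)) * P
      ∈ Submodule.span F {w | InS 1 w} := by
  by_cases hz : ∃ i, kk i = 0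
  · obtain ⟨i, hi⟩ := hz
    have h0 : (List.ofFn fun i => aF ((kk i : ℤ))).prod = 0 := by
      refine List.prod_eq_zero ?_
      rw [List.mem_ofFn]
      exact ⟨i, by simp [hi, aF]⟩
    rw [h0]
    simp
  · push_neg at hz
    have hT : mkU ((List.ofFn fun i => aF ((kk i : ℤ))).prod)
        = ((List.ofFn kk).map fun n : ℕ => AU (1 * (n : ℤ))).prod := by
      rw [map_list_prod, List.map_ofFn, List.map_ofFn]
      refine congrArg List.prod (congrArg List.ofFn (funext fun i => ?_))
      simp [AU, Function.comp]
    rw [hT]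
    set T : Uq := ((List.ofFn kk).map fun n : ℕ => AU (1 * (n : ℤ))).prod with hTdef
    have hKT : Commute KU T := by
      refine Commute.list_prod_right _ _ ?_
      intro x hx
      rw [List.mem_map] at hx
      obtain ⟨nn, _, rfl⟩ := hx
      exact K_comm_a _
    have heq : GhPow d * (KU * T) * P = T * KPow 1 * (P * GhPow d) := by
      calc GhPow d * (KU * T) * P = (KU * T) * GhPow d * P := by
            rw [(GhPow_central d (KU * T)).eq]
      _ = (KU * T) * (GhPow d * P) := mul_assoc _ _ _
      _ = (KU * T) * (P * GhPow d) := by rw [(GhPow_central d P).eq]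
      _ = (T * KU) * (P * GhPow d) := by rw [hKT.eq]
      _ = T * KPow 1 * (P * GhPow d) := by rw [KPow_one]
    rw [heq]
    refine Submodule.subset_span ?_
    refine ⟨List.ofFn kk, ?_, 1, P * GhPow d, mul_mem hP (GhPow_mem d), rfl⟩
    intro x hx
    rw [List.mem_ofFn] at hx
    obtain ⟨i, rfl⟩ := hx
    exact Nat.pos_of_ne_zero (hz i)

lemma phi_term (d : ℤ) {j : ℕ} (kk : Fin j → ℕ) (P : Uq) (hP : P ∈ Nsub) :
    GhPow d * (KinvU * mkU ((List.ofFn fun i => aF (-(kk i : ℤ))).prod)) * P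
      ∈ Submodule.span F {w | InS (-1) w} := by
  by_cases hz : ∃ i, kk i = 0
  · obtain ⟨i, hi⟩ := hz
    have h0 : (List.ofFn fun i => aF (-(kk i : ℤ))).prod = 0 := by
      refine List.prod_eq_zero ?_
      rw [List.mem_ofFn]
      exact ⟨i, by simp [hi, aF]⟩
    rw [h0]
    simp
  · push_neg at hz
    have hT : mkU ((List.ofFn fun i => aF (-(kk i : ℤ))).prod)
        = ((List.ofFn kk).map fun n : ℕ => AU (-1 * (n : ℤ))).prod := by
      rw [map_list_prod, List.map_ofFn, List.map_ofFn]
      refine congrArg List.prod (congrArg List.ofFn (funext fun i => ?_))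
      simp [AU, Function.comp, neg_one_mul]
    rw [hT]
    set T : Uq := ((List.ofFn kk).map fun n : ℕ => AU (-1 * (n : ℤ))).prod with hTdef
    have hKT : Commute KinvU T := by
      refine Commute.list_prod_right _ _ ?_
      intro x hx
      rw [List.mem_map] at hx
      obtain ⟨nn, _, rfl⟩ := hx
      exact Kinv_comm_a _
    have heq : GhPow d * (KinvU * T) * P = T * KPow (-1) * (P * GhPow d) := by
      calc GhPow d * (KinvU * T) * P = (KinvU * T) * GhPow d * P := by
            rw [(GhPow_central d (KinvU * T)).eq]
      _ = (KinvU * T) * (GhPow d * P) := mul_assoc _ _ _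
      _ = (KinvU * T) * (P * GhPow d) := by rw [(GhPow_central d P).eq]
      _ = (T * KinvU) * (P * GhPow d) := by rw [hKT.eq]
      _ = T * KPow (-1) * (P * GhPow d) := by rw [KPow_neg_one]
    rw [heq]
    refine Submodule.subset_span ?_
    refine ⟨List.ofFn kk, ?_, -1, P * GhPow d, mul_mem hP (GhPow_mem d), rfl⟩
    intro x hx
    rw [List.mem_ofFn] at hx
    obtain ⟨i, rfl⟩ := hx
    exact Nat.pos_of_ne_zero (hz i)

lemma psi_full (d m : ℤ) (P : Uq) (hP : P ∈ Nsub) :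
    mkU (ghPowF d * psiF m) * P ∈ Submodule.span F {w | InS 1 w} := by
  rw [map_mul, ← GhPow]
  simp only [psiF]
  split_ifs with h1 h2
  · simp
  · -- mkU KF = KU
    show GhPow d * KU * P ∈ _
    refine Submodule.subset_span ?_
    refine ⟨[], fun n hn => absurd hn List.not_mem_nil, 1, P * GhPow d,
      mul_mem hP (GhPow_mem d), ?_⟩
    calc GhPow d * KU * P = KU * GhPow d * P := by rw [(GhPow_central d KU).eq]
    _ = KU * (GhPow d * P) := mul_assoc _ _ _
    _ = KU * (P * GhPow d) := by rw [(GhPow_central d P).eq]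
    _ = ([].map fun n : ℕ => AU (1 * (n : ℤ))).prod * KPow 1 * (P * GhPow d) := by
          rw [List.map_nil, List.prod_nil, one_mul, KPow_one]
  · rw [map_mul]
    show GhPow d * (KU * mkU _) * P ∈ _
    rw [map_sum]
    simp only [map_smul, map_sum]
    simp only [Finset.mul_sum, Finset.sum_mul, mul_smul_comm, smul_mul_assoc]
    refine Submodule.sum_mem _ fun j hj => Submodule.smul_mem _ _
      (Submodule.sum_mem _ fun kk hk => ?_)
    exact psi_term d kk P hP

lemma phi_full (d m : ℤ) (P : Uq) (hP : P ∈ Nsub) :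
    mkU (ghPowF d * phiF m) * P ∈ Submodule.span F {w | InS (-1) w} := by
  rw [map_mul, ← GhPow]
  simp only [phiF]
  split_ifs with h1 h2
  · simp
  · show GhPow d * KinvU * P ∈ _
    refine Submodule.subset_span ?_
    refine ⟨[], fun n hn => absurd hn List.not_mem_nil, -1, P * GhPow d,
      mul_mem hP (GhPow_mem d), ?_⟩
    calc GhPow d * KinvU * P = KinvU * GhPow d * P := by rw [(GhPow_central d KinvU).eq]
    _ = KinvU * (GhPow d * P) := mul_assoc _ _ _
    _ = KinvU * (P * GhPow d) := by rw [(GhPow_central d P).eq]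
    _ = ([].map fun n : ℕ => AU (-1 * (n : ℤ))).prod * KPow (-1) * (P * GhPow d) := by
          rw [List.map_nil, List.prod_nil, one_mul, KPow_neg_one]
  · rw [map_mul]
    show GhPow d * (KinvU * mkU _) * P ∈ _
    rw [map_sum]
    simp only [map_smul, map_sum]
    simp only [Finset.mul_sum, Finset.sum_mul, mul_smul_comm, smul_mul_assoc]
    refine Submodule.sum_mem _ fun j hj => Submodule.smul_mem _ _
      (Submodule.sum_mem _ fun kk hk => ?_)
    exact phi_term d kk P hP

lemma spanSet_eq : SpanSet = {w | InS 1 w} ∪ {w | InS (-1) w} := by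
  ext z
  constructor
  · rintro (⟨j, r, hr, a, Q, hQ, rfl⟩ | ⟨j, r, hr, a, Q, hQ, rfl⟩)
    · left
      refine ⟨List.ofFn r, ?_, a, Q, hQ, ?_⟩
      · intro x hx
        rw [List.mem_ofFn] at hx
        obtain ⟨i, rfl⟩ := hx
        exact hr i
      · rw [List.map_ofFn]
        simp only [Function.comp_def, one_mul]
    · right
      refine ⟨List.ofFn r, ?_, a, Q, hQ, ?_⟩
      · intro x hx
        rw [List.mem_ofFn] at hx
        obtain ⟨i, rfl⟩ := hx
        exact hr i
      · rw [List.map_ofFn]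
        simp only [Function.comp_def, neg_one_mul]
  · rintro (⟨s, hs, a, Q, hQ, rfl⟩ | ⟨s, hs, a, Q, hQ, rfl⟩)
    · left
      refine ⟨s.length, fun i => s.get i, fun i => hs _ (List.mem_iff_get.mpr ⟨i, rfl⟩),
        a, Q, hQ, ?_⟩
      have hmap : s.map (fun n : ℕ => AU (1 * (n : ℤ)))
          = List.ofFn (fun i => AU ((s.get i : ℤ))) := by
        conv_lhs => rw [← List.ofFn_get s]
        rw [List.map_ofFn]
        simp only [Function.comp_def, one_mul]
      rw [hmap]
    · right
      refine ⟨s.length, fun i => s.get i, fun i => hs _ (List.mem_iff_get.mpr ⟨i, rfl⟩),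
        a, Q, hQ, ?_⟩
      have hmap : s.map (fun n : ℕ => AU (-1 * (n : ℤ)))
          = List.ofFn (fun i => AU (-(s.get i : ℤ))) := by
        conv_lhs => rw [← List.ofFn_get s]
        rw [List.map_ofFn]
        simp only [Function.comp_def, neg_one_mul]
      rw [hmap]

/-- For every `k ∈ ℤ` and every finite product `P = x⁻(m₁)⋯x⁻(m_r)`,
the commutator `[x⁺(k), P]` lies in the `F`-linear span of `SpanSet`. -/
theorem stmt12 (k : ℤ) (ms : List ℤ) :
    XP k * (ms.map XM).prod - (ms.map XM).prod * XP k ∈ Submodule.span F SpanSet := by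
  induction ms with
  | nil => simp
  | cons m ms ih =>
    rw [List.map_cons, List.prod_cons]
    set R : Uq := (ms.map XM).prod with hR
    have hRmem : R ∈ Nsub := by
      refine Subalgebra.list_prod_mem _ ?_
      intro x hx
      rw [List.mem_map] at hx
      obtain ⟨m', _, rfl⟩ := hx
      exact XM_mem m'
    have split : XP k * (XM m * R) - (XM m * R) * XP k
        = (XP k * XM m - XM m * XP k) * R + XM m * (XP k * R - R * XP k) := by
      simp only [mul_sub, sub_mul, mul_assoc]; abel
    rw [split, spanSet_eq, Submodule.span_union]
    refine add_mem ?_ ?_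
    · have hrel : XP k * XM m - XM m * XP k
          = (q - q⁻¹)⁻¹ • (RingQuot.mkAlgHom F URel (ghPowF (k - m) * psiF (k + m))
              - RingQuot.mkAlgHom F URel (ghPowF (m - k) * phiF (k + m))) := by
        have h0 := RingQuot.mkAlgHom_rel F (URel.xpxm k m)
        rw [map_sub, map_mul, map_mul, map_smul, map_sub] at h0
        exact h0
      rw [hrel, smul_mul_assoc, sub_mul]
      refine Submodule.smul_mem _ _ (sub_mem ?_ ?_)
      · exact Submodule.mem_sup_left (psi_full (k - m) (k + m) R hRmem)
      · exact Submodule.mem_sup_right (phi_full (m - k) (k + m) R hRmem)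
    · rw [spanSet_eq, Submodule.span_union] at ih
      rw [Submodule.mem_sup] at ih
      obtain ⟨y, hy, z, hz, hyz⟩ := ih
      rw [← hyz, mul_add]
      exact add_mem (Submodule.mem_sup_left (xm_mul_span 1 m y hy))
        (Submodule.mem_sup_right (xm_mul_span (-1) m z hz))
end
end

section
/- Assume h = 0 (any d ∈ ℤ), let J be the left ideal of U_q generated by {x⁺(k) : k ∈ ℤ} ∪ {a(l) : l ≠ 0} ∪ {K − 1, K⁻¹ − 1, D − qᵈ·1, D⁻¹ − q⁻ᵈ·1, γ^{1/2} − 1, γ^{−1/2} − 1}, let M̃ = U_q/J and let 1̄ ∈ M̃ denote the image of 1. Then for all integers s and m, x⁺(s)·(x⁻(m)·1̄) = 0 in M̃. (Hence any nonzero vector of the form x⁻(m)·1̄ generates a proper submodule of M̃.) -/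
noncomputable section

/-- The left ideal `J` of `U_q` generated by the `x⁺(k)`, the `a(l)` (`l ≠ 0`),
`K − qʰ·1`, `K⁻¹ − q⁻ʰ·1`, `D − qᵈ·1`, `D⁻¹ − q⁻ᵈ·1`, `γ^{1/2} − 1`, `γ^{−1/2} − 1`. -/
def Jid (h d : ℤ) : Submodule Uq Uq :=
  Submodule.span Uq
    (Set.range XP ∪ {z | ∃ l : ℤ, l ≠ 0 ∧ z = AU l} ∪
      {KU - algebraMap F Uq (q ^ h), KinvU - algebraMap F Uq (q ^ (-h)),
       DU - algebraMap F Uq (q ^ d), DinvU - algebraMap F Uq (q ^ (-d)),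
       GhU - 1, GhiU - 1})

/-- Shorthand for the quotient map. -/
def mm : UFA →ₐ[F] Uq := RingQuot.mkAlgHom F URel

lemma XP_mem (d k : ℤ) : XP k ∈ Jid 0 d :=
  Submodule.subset_span (by left; left; exact ⟨k, rfl⟩)

lemma AU_mem (d l : ℤ) : AU l ∈ Jid 0 d := by
  rcases eq_or_ne l 0 with h | h
  · have : AU l = 0 := by simp [AU, aF, h]
    rw [this]; exact zero_mem _
  · exact Submodule.subset_span (by left; right; exact ⟨l, h, rfl⟩)

lemma KU_sub_one_mem (d : ℤ) : KU - 1 ∈ Jid 0 d := by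
  have : KU - 1 = KU - algebraMap F Uq (q ^ (0:ℤ)) := by simp
  rw [this]
  exact Submodule.subset_span (by right; simp)

lemma KinvU_sub_one_mem (d : ℤ) : KinvU - 1 ∈ Jid 0 d := by
  have : KinvU - 1 = KinvU - algebraMap F Uq (q ^ (-(0:ℤ))) := by simp
  rw [this]
  exact Submodule.subset_span (by right; simp)

lemma GhU_sub_one_mem (d : ℤ) : GhU - 1 ∈ Jid 0 d :=
  Submodule.subset_span (by right; simp)

lemma GhiU_sub_one_mem (d : ℤ) : GhiU - 1 ∈ Jid 0 d :=
  Submodule.subset_span (by right; simp)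

lemma pow_sub_one_mem (d : ℤ) {g : Uq} (hg : g - 1 ∈ Jid 0 d) (n : ℕ) :
    g ^ n - 1 ∈ Jid 0 d := by
  induction n with
  | zero => simp
  | succ n ih =>
    have : g ^ (n + 1) - 1 = g ^ n * (g - 1) + (g ^ n - 1) := by
      rw [pow_succ, mul_sub, mul_one]; abel
    rw [this]
    exact add_mem ((Jid 0 d).smul_mem (g ^ n) hg) ih

lemma ghPow_sub_one_mem (d a : ℤ) : mm (ghPowF a) - 1 ∈ Jid 0 d := by
  unfold ghPowF
  split
  · rw [map_pow]
    exact pow_sub_one_mem d (GhU_sub_one_mem d) _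
  · rw [map_pow]
    exact pow_sub_one_mem d (GhiU_sub_one_mem d) _

lemma prod_aF_mem (d : ℤ) (j : ℕ) (hj : 1 ≤ j) (f : Fin j → ℤ) :
    mm (List.ofFn fun i => aF (f i)).prod ∈ Jid 0 d := by
  obtain ⟨j', rfl⟩ : ∃ j', j = j' + 1 := ⟨j - 1, by omega⟩
  rw [List.ofFn_succ', List.concat_eq_append, List.prod_append, List.prod_singleton,
    map_mul]
  exact (Jid 0 d).smul_mem _ (AU_mem d _)

lemma psi_mem (d : ℤ) {n : ℤ} (hn : 0 < n) : mm (psiF n) ∈ Jid 0 d := by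
  unfold psiF
  rw [if_neg (by omega), if_neg (by omega), map_mul]
  refine (Jid 0 d).smul_mem _ ?_
  rw [map_sum]
  refine Submodule.sum_mem _ fun j hj => ?_
  rw [map_smul]
  refine Submodule.smul_of_tower_mem _ _ ?_
  rw [map_sum]
  refine Submodule.sum_mem _ fun k _ => ?_
  exact prod_aF_mem d j (Finset.mem_Icc.mp hj).1 _

lemma phi_mem (d : ℤ) {n : ℤ} (hn : n < 0) : mm (phiF n) ∈ Jid 0 d := by
  unfold phiF
  rw [if_neg (by omega), if_neg (by omega), map_mul]
  refine (Jid 0 d).smul_mem _ ?_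
  rw [map_sum]
  refine Submodule.sum_mem _ fun j hj => ?_
  rw [map_smul]
  refine Submodule.smul_of_tower_mem _ _ ?_
  rw [map_sum]
  refine Submodule.sum_mem _ fun k _ => ?_
  exact prod_aF_mem d j (Finset.mem_Icc.mp hj).1 _

lemma key_mem (d a b n : ℤ) :
    mm (ghPowF a * psiF n - ghPowF b * phiF n) ∈ Jid 0 d := by
  rw [map_sub, map_mul, map_mul]
  rcases lt_trichotomy n 0 with hn | hn | hn
  · have hpsi : psiF n = 0 := by unfold psiF; rw [if_pos hn]
    rw [hpsi, map_zero, mul_zero, zero_sub]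
    exact neg_mem ((Jid 0 d).smul_mem _ (phi_mem d hn))
  · subst hn
    have hpsi : psiF 0 = KF := by unfold psiF; simp
    have hphi : phiF 0 = KinvF := by unfold phiF; simp
    rw [hpsi, hphi]
    have hK : mm KF = KU := rfl
    have hKi : mm KinvF = KinvU := rfl
    rw [hK, hKi]
    have hexp : mm (ghPowF a) * KU - mm (ghPowF b) * KinvU =
        mm (ghPowF a) * (KU - 1) - mm (ghPowF b) * (KinvU - 1)
          + ((mm (ghPowF a) - 1) - (mm (ghPowF b) - 1)) := by
      rw [mul_sub, mul_sub, mul_one, mul_one]; abel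
    rw [hexp]
    exact add_mem
      (sub_mem ((Jid 0 d).smul_mem _ (KU_sub_one_mem d))
        ((Jid 0 d).smul_mem _ (KinvU_sub_one_mem d)))
      (sub_mem (ghPow_sub_one_mem d a) (ghPow_sub_one_mem d b))
  · have hphi : phiF n = 0 := by unfold phiF; rw [if_pos hn]
    rw [hphi, map_zero, mul_zero, sub_zero]
    exact (Jid 0 d).smul_mem _ (psi_mem d hn)

lemma XPXM_mem (d s m : ℤ) : XP s * XM m ∈ Jid 0 d := by
  have hrel := RingQuot.mkAlgHom_rel F (URel.xpxm s m)
  have hrel' : XP s * XM m - XM m * XP s =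
      (q - q⁻¹)⁻¹ • mm (ghPowF (s - m) * psiF (s + m) - ghPowF (m - s) * phiF (s + m)) := by
    have := hrel
    rw [map_sub, map_mul, map_mul, map_smul] at this
    exact this
  have : XP s * XM m = XM m * XP s +
      (q - q⁻¹)⁻¹ • mm (ghPowF (s - m) * psiF (s + m) - ghPowF (m - s) * phiF (s + m)) := by
    rw [← hrel']; abel
  rw [this]
  exact add_mem ((Jid 0 d).smul_mem (XM m) (XP_mem d s))
    (Submodule.smul_of_tower_mem _ _ (key_mem d _ _ _))

/-- With `h = 0`: for all `s, m ∈ ℤ`, `x⁺(s)·(x⁻(m)·1̄) = 0` in `M̃ = U_q/J`. -/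
theorem stmt15 (d s m : ℤ) :
    XP s • (XM m • (Submodule.Quotient.mk 1 : Uq ⧸ Jid 0 d)) = 0 := by
  rw [← Submodule.Quotient.mk_smul, ← Submodule.Quotient.mk_smul,
    Submodule.Quotient.mk_eq_zero]
  simpa [smul_eq_mul, ← mul_assoc] using XPXM_mem d s m
end
end
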